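/- For every real number r with 0 < r < 1/2, there is no finite family of graphs 𝓗 such that spex(n,𝓗) = Θ(n^r). Equivalently, for every finite family 𝓗 of graphs, either spex(n,𝓗) = O(1) or spex(n,𝓗) = Ω(n^{1/2}) (in fact spex(n,𝓗) ≥ √(n−1) for all n in the latter case). -/

import Mathlib

/-- Number of edges of a simple graph. -/
noncomputable def edgeCount {V : Type*} (G : SimpleGraph V) : ℕ := Nat.card G.edgeSet

/-- Average degree `2e(G)/|V(G)|` of a simple graph. -/
noncomputable def avgDeg {V : Type*} (G : SimpleGraph V) : ℝ :=
  2 * (edgeCount G : ℝ) / (Nat.card V : ℝ)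

/-- Degree of a vertex. -/
noncomputable def deg {V : Type*} (G : SimpleGraph V) (v : V) : ℕ := Nat.card (G.neighborSet v)

/-- Minimum degree. -/
noncomputable def minDeg {V : Type*} [Fintype V] (G : SimpleGraph V) : ℕ :=
  sInf (Set.range (deg G))

/-- Maximum degree. -/
noncomputable def maxDeg {V : Type*} [Fintype V] (G : SimpleGraph V) : ℕ :=
  Finset.univ.sup (deg G)

open Classical in
/-- Adjacency matrix over the reals. -/
noncomputable def adjMat {V : Type*} [Fintype V] (G : SimpleGraph V) : Matrix V V ℝ :=
  G.adjMatrix ℝ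

/-- Spectral radius: the largest eigenvalue of the adjacency matrix. -/
noncomputable def specRad {V : Type*} [Fintype V] (G : SimpleGraph V) : ℝ :=
  sSup {μ : ℝ | ∃ x : V → ℝ, x ≠ 0 ∧ (adjMat G).mulVec x = μ • x}

/-- `H` is (isomorphic to) a subgraph of `G`, i.e. `H` is obtained from `G` by
deleting vertices and/or edges. -/
def IsSubgraphOf {α β : Type*} (H : SimpleGraph α) (G : SimpleGraph β) : Prop :=
  ∃ f : α ↪ β, ∀ u v, H.Adj u v → G.Adj (f u) (f v)

/-- `G` contains no member of the family `𝓗` as a subgraph. -/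
def HFree {n : ℕ} (𝓗 : Set (Σ m : ℕ, SimpleGraph (Fin m))) (G : SimpleGraph (Fin n)) : Prop :=
  ∀ H ∈ 𝓗, ¬ IsSubgraphOf H.2 G

/-- Turán number: maximum number of edges of an `n`-vertex `𝓗`-free graph. -/
noncomputable def exNum (𝓗 : Set (Σ m : ℕ, SimpleGraph (Fin m))) (n : ℕ) : ℕ :=
  sSup {k : ℕ | ∃ G : SimpleGraph (Fin n), HFree 𝓗 G ∧ edgeCount G = k}

/-- Spectral Turán number: maximum spectral radius of an `n`-vertex `𝓗`-free graph. -/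
noncomputable def spexNum (𝓗 : Set (Σ m : ℕ, SimpleGraph (Fin m))) (n : ℕ) : ℝ :=
  sSup {μ : ℝ | ∃ G : SimpleGraph (Fin n), HFree 𝓗 G ∧ specRad G = μ}

open Finset

def starG (k : ℕ) : SimpleGraph (Fin (k+1)) where
  Adj u v := u ≠ v ∧ (u = 0 ∨ v = 0)
  symm := ⟨fun u v ⟨h1, h2⟩ => ⟨h1.symm, h2.symm⟩⟩
  loopless := ⟨fun u ⟨h, _⟩ => h rfl⟩

lemma rowSum {n : ℕ} (G : SimpleGraph (Fin n)) (v : Fin n) :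
    ∑ u, adjMat G v u = (deg G v : ℝ) := by
  classical
  have h1 : deg G v = (univ.filter (fun u => G.Adj v u)).card := by
    rw [deg, Nat.card_eq_fintype_card, Fintype.card_subtype]
    congr 1
  simp only [adjMat, SimpleGraph.adjMatrix_apply]
  rw [Finset.sum_boole, h1]

lemma eig_le {n : ℕ} {G : SimpleGraph (Fin n)} {μ : ℝ} {x : Fin n → ℝ} (hx : x ≠ 0)
    (hμ : (adjMat G).mulVec x = μ • x) : ∃ v, μ ≤ (deg G v : ℝ) := by
  classical
  obtain ⟨w, hw⟩ : ∃ w, x w ≠ 0 := by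
    by_contra h; push_neg at h; exact hx (funext h)
  obtain ⟨v, -, hv⟩ := Finset.exists_max_image Finset.univ (fun u => |x u|) ⟨w, mem_univ w⟩
  have hvpos : 0 < |x v| := lt_of_lt_of_le (abs_pos.mpr hw) (hv w (mem_univ w))
  refine ⟨v, ?_⟩
  have h1 : μ * x v = ∑ u, adjMat G v u * x u := by
    have := congrFun hμ v
    simpa [Matrix.mulVec, dotProduct] using this.symm
  have hA : ∀ u, 0 ≤ adjMat G v u := by
    intro u; simp only [adjMat, SimpleGraph.adjMatrix_apply]; positivity
  have h2 : |μ| * |x v| ≤ (deg G v : ℝ) * |x v| := by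
    calc |μ| * |x v| = |∑ u, adjMat G v u * x u| := by rw [← abs_mul, h1]
      _ ≤ ∑ u, |adjMat G v u * x u| := Finset.abs_sum_le_sum_abs _ _
      _ = ∑ u, adjMat G v u * |x u| := by
          refine Finset.sum_congr rfl fun u _ => ?_
          rw [abs_mul, abs_of_nonneg (hA u)]
      _ ≤ ∑ u, adjMat G v u * |x v| := by
          refine Finset.sum_le_sum fun u _ => ?_
          exact mul_le_mul_of_nonneg_left (hv u (mem_univ u)) (hA u)
      _ = (∑ u, adjMat G v u) * |x v| := by rw [Finset.sum_mul]
      _ = (deg G v : ℝ) * |x v| := by rw [rowSum]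
  exact (le_abs_self μ).trans (le_of_mul_le_mul_right h2 hvpos)

lemma deg_le_card {n : ℕ} (G : SimpleGraph (Fin n)) (v : Fin n) : deg G v ≤ n := by
  rw [deg, Nat.card_coe_set_eq]
  calc (G.neighborSet v).ncard ≤ (Set.univ : Set (Fin n)).ncard :=
        Set.ncard_le_ncard (Set.subset_univ _) Set.finite_univ
    _ = n := by rw [Set.ncard_univ, Nat.card_eq_fintype_card, Fintype.card_fin]

lemma specRad_le_card {n : ℕ} (G : SimpleGraph (Fin n)) : specRad G ≤ n := by
  refine Real.sSup_le ?_ (Nat.cast_nonneg n)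
  rintro μ ⟨x, hx, hμ⟩
  obtain ⟨v, hv⟩ := eig_le hx hμ
  exact hv.trans (by exact_mod_cast deg_le_card G v)

lemma star_le {n k : ℕ} (G : SimpleGraph (Fin n)) (v : Fin n) (h : k ≤ deg G v) :
    IsSubgraphOf (starG k) G := by
  classical
  have hcard : k ≤ (G.neighborFinset v).card := by
    rwa [deg, Nat.card_eq_fintype_card, ← Set.toFinset_card,
      ← SimpleGraph.neighborFinset_def] at h
  obtain ⟨t, hts, htc⟩ := Finset.exists_subset_card_eq hcard
  let e := t.orderIsoOfFin htc
  have hmem : ∀ j : Fin k, G.Adj v ((e j : Fin n)) := by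
    intro j
    have : (e j : Fin n) ∈ G.neighborFinset v := hts (e j).2
    rwa [SimpleGraph.mem_neighborFinset] at this
  set f : Fin (k+1) → Fin n := fun i => if h : i = 0 then v else (e (i.pred h) : Fin n) with hf
  have hinj : Function.Injective f := by
    intro a b hab
    by_cases ha : a = 0 <;> by_cases hb : b = 0
    · rw [ha, hb]
    · rw [hf] at hab; simp only at hab
      rw [dif_pos ha, dif_neg hb] at hab
      have := hmem (b.pred hb); rw [← hab] at this
      exact absurd this (G.loopless.irrefl v)
    · rw [hf] at hab; simp only at hab
      rw [dif_neg ha, dif_pos hb] at hab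
      have := hmem (a.pred ha); rw [hab] at this
      exact absurd this (G.loopless.irrefl v)
    · rw [hf] at hab; simp only at hab
      rw [dif_neg ha, dif_neg hb] at hab
      exact Fin.pred_inj.mp (e.injective (Subtype.ext hab))
  refine ⟨⟨f, hinj⟩, ?_⟩
  rintro a b ⟨hne, hor⟩
  simp only [Function.Embedding.coeFn_mk, hf]
  rcases hor with rfl | rfl
  · have hb : b ≠ 0 := fun hb => hne hb.symm
    rw [dif_pos rfl, dif_neg hb]
    exact hmem (b.pred hb)
  · have ha : a ≠ 0 := hne
    rw [dif_pos rfl, dif_neg ha]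
    exact (hmem (a.pred ha)).symm

lemma starG_mulVec (k : ℕ) :
    (adjMat (starG k)).mulVec (fun i => if i = 0 then Real.sqrt k else 1)
      = Real.sqrt k • (fun i => if i = 0 then Real.sqrt k else 1) := by
  classical
  funext i
  have hAdj : ∀ a b : Fin (k+1), (starG k).Adj a b ↔ (a ≠ b ∧ (a = 0 ∨ b = 0)) := fun a b => Iff.rfl
  have hA : ∀ a b : Fin (k+1), adjMat (starG k) a b
      = if ((starG k).Adj a b) then (1:ℝ) else 0 := by
    intro a b; simp [adjMat]
  show ∑ u, adjMat (starG k) i u * (if u = 0 then Real.sqrt k else 1)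
      = Real.sqrt k * (if i = 0 then Real.sqrt k else 1)
  rw [Fin.sum_univ_succ]
  by_cases hi : i = 0
  · subst hi
    have h0 : adjMat (starG k) 0 0 = 0 := by
      rw [hA]; simp [starG]
    have hsucc : ∀ j : Fin k, adjMat (starG k) 0 j.succ = 1 := by
      intro j; rw [hA, if_pos]
      exact ⟨(Fin.succ_ne_zero j).symm, Or.inl rfl⟩
    simp only [h0, hsucc, if_pos rfl, zero_mul, one_mul]
    have : ∀ j : Fin k, (if (j.succ : Fin (k+1)) = 0 then Real.sqrt k else (1:ℝ)) = 1 := by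
      intro j; rw [if_neg (Fin.succ_ne_zero j)]
    rw [Finset.sum_congr rfl (fun j _ => this j)]
    simp [Real.mul_self_sqrt (Nat.cast_nonneg k)]
  · have h0 : adjMat (starG k) i 0 = 1 := by
      rw [hA, if_pos]; exact ⟨hi, Or.inr rfl⟩
    have hsucc : ∀ j : Fin k, adjMat (starG k) i j.succ = 0 := by
      intro j; rw [hA, if_neg]
      rintro ⟨-, h | h⟩
      · exact hi h
      · exact Fin.succ_ne_zero j h
    simp only [h0, hsucc, if_pos rfl, zero_mul, one_mul, if_neg hi]
    simp

lemma sqrt_le_specRad_starG (k : ℕ) : Real.sqrt k ≤ specRad (starG k) := by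
  have hbdd : BddAbove {μ : ℝ | ∃ x : Fin (k+1) → ℝ, x ≠ 0 ∧ (adjMat (starG k)).mulVec x = μ • x} := by
    refine ⟨(k+1 : ℝ), ?_⟩
    rintro μ ⟨x, hx, hμ⟩
    obtain ⟨v, hv⟩ := eig_le hx hμ
    have := deg_le_card (starG k) v
    push_cast
    exact hv.trans (by exact_mod_cast this)
  rcases Nat.eq_zero_or_pos k with rfl | hk
  · have hmem : (0:ℝ) ∈ {μ : ℝ | ∃ x : Fin 1 → ℝ, x ≠ 0 ∧ (adjMat (starG 0)).mulVec x = μ • x} := by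
      refine ⟨fun _ => 1, ?_, ?_⟩
      · intro h; have := congrFun h 0; simp at this
      · funext i
        have : ∀ u : Fin 1, adjMat (starG 0) i u = 0 := by
          intro u
          have : ¬ (starG 0).Adj i u := by
            rintro ⟨h, -⟩; exact h (Fin.ext (by omega))
          simp [adjMat, this]
        show ∑ u, adjMat (starG 0) i u * 1 = (0:ℝ) • (fun _ => (1:ℝ)) i
        simp [this]
    simpa [specRad] using le_csSup hbdd hmem
  · refine le_csSup hbdd ⟨fun i => if i = 0 then Real.sqrt k else 1, ?_, starG_mulVec k⟩
    intro h
    have h1 : ((⟨1, by omega⟩ : Fin (k+1)) : Fin (k+1)) ≠ 0 := by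
      intro hh
      have := congrArg Fin.val hh
      simp at this
    have := congrFun h ⟨1, by omega⟩
    rw [if_neg h1] at this
    simp at this

lemma subgraph_trans {α β γ : Type*} {A : SimpleGraph α} {B : SimpleGraph β} {C : SimpleGraph γ}
    (h1 : IsSubgraphOf A B) (h2 : IsSubgraphOf B C) : IsSubgraphOf A C := by
  obtain ⟨f, hf⟩ := h1; obtain ⟨g, hg⟩ := h2
  exact ⟨f.trans g, fun u v h => hg _ _ (hf u v h)⟩

lemma dichot (𝓗 : Set (Σ m : ℕ, SimpleGraph (Fin m))) :
    (∃ C : ℝ, ∃ N : ℕ, ∀ n : ℕ, N ≤ n → spexNum 𝓗 n ≤ C) ∨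
      (∀ n : ℕ, 1 ≤ n → Real.sqrt ((n : ℝ) - 1) ≤ spexNum 𝓗 n) := by
  by_cases hP : ∃ k : ℕ, ∃ H ∈ 𝓗, IsSubgraphOf H.2 (starG k)
  · left
    obtain ⟨k, H, hH, hHk⟩ := hP
    refine ⟨(k : ℝ), 0, fun n _ => ?_⟩
    refine Real.sSup_le ?_ (Nat.cast_nonneg k)
    rintro μ ⟨G, hG, rfl⟩
    refine Real.sSup_le ?_ (Nat.cast_nonneg k)
    rintro μ' ⟨x, hx, hm⟩
    obtain ⟨v, hv⟩ := eig_le hx hm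
    have hnot : ¬ IsSubgraphOf (starG k) G := fun hsub => hG H hH (subgraph_trans hHk hsub)
    have hdeg : deg G v < k := by
      by_contra hc
      push_neg at hc
      exact hnot (star_le G v hc)
    exact hv.trans (by exact_mod_cast hdeg.le)
  · right
    push_neg at hP
    intro n hn
    obtain ⟨k, rfl⟩ : ∃ k, n = k + 1 := ⟨n - 1, by omega⟩
    have hmem : specRad (starG k) ∈
        {μ : ℝ | ∃ G : SimpleGraph (Fin (k+1)), HFree 𝓗 G ∧ specRad G = μ} :=
      ⟨starG k, fun H hH => hP k H hH, rfl⟩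
    have hbdd : BddAbove {μ : ℝ | ∃ G : SimpleGraph (Fin (k+1)), HFree 𝓗 G ∧ specRad G = μ} := by
      refine ⟨(k+1 : ℝ), ?_⟩
      rintro μ ⟨G, -, rfl⟩
      exact (specRad_le_card G).trans (by push_cast; linarith)
    calc Real.sqrt ((↑(k+1) : ℝ) - 1) = Real.sqrt k := by norm_num
      _ ≤ specRad (starG k) := sqrt_le_specRad_starG k
      _ ≤ spexNum 𝓗 (k+1) := le_csSup hbdd hmem

/-- for `0 < r < 1/2` no finite family `𝓗` has `spex(n,𝓗) = Θ(n^r)`;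
indeed for every finite `𝓗`, `spex(n,𝓗)` is either `O(1)` or at least `√(n-1)` for all `n ≥ 1`. -/
theorem stmt9 (𝓗 : Set (Σ m : ℕ, SimpleGraph (Fin m))) (h𝓗 : 𝓗.Finite) :
    (∀ r : ℝ, 0 < r → r < 1/2 →
      ¬ ∃ C₁ C₂ : ℝ, ∃ N : ℕ, 0 < C₁ ∧ C₁ ≤ C₂ ∧
        ∀ n : ℕ, N ≤ n →
          C₁ * (n : ℝ) ^ r ≤ spexNum 𝓗 n ∧ spexNum 𝓗 n ≤ C₂ * (n : ℝ) ^ r) ∧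
    ((∃ C : ℝ, ∃ N : ℕ, ∀ n : ℕ, N ≤ n → spexNum 𝓗 n ≤ C) ∨
      (∀ n : ℕ, 1 ≤ n → Real.sqrt ((n : ℝ) - 1) ≤ spexNum 𝓗 n)) := by
  refine ⟨?_, dichot 𝓗⟩
  rintro r hr hr2 ⟨C₁, C₂, N, h1, h12, hb⟩
  rcases dichot 𝓗 with ⟨C, N', hC⟩ | hl
  · -- O(1) case: contradiction with lower bound C₁ n^r
    obtain ⟨M, hMdef⟩ : ∃ M : ℝ, M = max (C / C₁) 0 + 1 := ⟨_, rfl⟩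
    have hM0 : (0:ℝ) < M := by
      have : (0:ℝ) ≤ max (C / C₁) 0 := le_max_right _ _
      linarith
    obtain ⟨n, hndef⟩ : ∃ n : ℕ, n = max N N' + ⌈M ^ (1/r)⌉₊ := ⟨_, rfl⟩
    have hnN : N ≤ n := by omega
    have hnN' : N' ≤ n := by omega
    have h1n : M ^ (1/r) ≤ (n : ℝ) := by
      refine (Nat.le_ceil _).trans ?_
      have : ⌈M ^ (1/r)⌉₊ ≤ n := by omega
      exact_mod_cast this
    have hrpow : M ≤ (n : ℝ) ^ r := by
      have key : (M ^ (1/r)) ^ r = M := by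
        rw [← Real.rpow_mul hM0.le, one_div_mul_cancel hr.ne', Real.rpow_one]
      rw [← key]
      exact Real.rpow_le_rpow (Real.rpow_nonneg hM0.le _) h1n hr.le
    have hs := (hb n hnN).1
    have hc := hC n hnN'
    have hCM : C < C₁ * M := by
      have hcc : C₁ * (C / C₁) = C := mul_div_cancel₀ _ h1.ne'
      nlinarith [mul_le_mul_of_nonneg_left (le_max_left (C / C₁) 0) h1.le]
    have : C₁ * M ≤ C₁ * (n : ℝ) ^ r := mul_le_mul_of_nonneg_left hrpow h1.le
    linarith
  · -- Ω(√n) case: contradiction with upper bound C₂ n^r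
    have hC₂ : 0 < C₂ := lt_of_lt_of_le h1 h12
    obtain ⟨s, hsdef⟩ : ∃ s : ℝ, s = 1/2 - r := ⟨_, rfl⟩
    have hs0 : 0 < s := by rw [hsdef]; linarith
    obtain ⟨M, hMdef⟩ : ∃ M : ℝ, M = Real.sqrt 2 * C₂ + 1 := ⟨_, rfl⟩
    have hsqrt2 : (0:ℝ) < Real.sqrt 2 := Real.sqrt_pos.mpr (by norm_num)
    have hM0 : (0:ℝ) < M := by rw [hMdef]; positivity
    obtain ⟨n, hndef⟩ : ∃ n : ℕ, n = N + ⌈M ^ (1/s)⌉₊ + 2 := ⟨_, rfl⟩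
    have hnN : N ≤ n := by omega
    have hn2 : 2 ≤ n := by omega
    have hn1 : 1 ≤ n := by omega
    have hn0 : (0:ℝ) < n := by positivity
    have h1n : M ^ (1/s) ≤ (n : ℝ) := by
      refine (Nat.le_ceil _).trans ?_
      have : (⌈M ^ (1/s)⌉₊ : ℕ) ≤ n := by omega
      exact_mod_cast this
    have hns : M ≤ (n : ℝ) ^ s := by
      have key : (M ^ (1/s)) ^ s = M := by
        rw [← Real.rpow_mul hM0.le, one_div_mul_cancel hs0.ne', Real.rpow_one]
      rw [← key]
      exact Real.rpow_le_rpow (Real.rpow_nonneg hM0.le _) h1n hs0.le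
    have hnr : (0:ℝ) < (n : ℝ) ^ r := Real.rpow_pos_of_pos hn0 r
    have hn2R : (2:ℝ) ≤ (n:ℝ) := by exact_mod_cast hn2
    have key : (n : ℝ) ^ r * M / Real.sqrt 2 ≤ Real.sqrt ((n : ℝ) - 1) := by
      have step1 : Real.sqrt ((n:ℝ)/2) ≤ Real.sqrt ((n:ℝ) - 1) :=
        Real.sqrt_le_sqrt (by linarith)
      have step2 : Real.sqrt ((n:ℝ)/2) = Real.sqrt n / Real.sqrt 2 :=
        Real.sqrt_div (by positivity) 2
      have step3 : Real.sqrt (n:ℝ) = (n:ℝ) ^ r * (n:ℝ) ^ s := by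
        rw [Real.sqrt_eq_rpow, ← Real.rpow_add hn0]
        norm_num [hsdef]
      have step4 : (n : ℝ) ^ r * M ≤ Real.sqrt (n:ℝ) := by
        rw [step3]
        exact mul_le_mul_of_nonneg_left hns hnr.le
      calc (n : ℝ) ^ r * M / Real.sqrt 2 ≤ Real.sqrt (n:ℝ) / Real.sqrt 2 := by
            exact (div_le_div_iff_of_pos_right hsqrt2).mpr step4
        _ = Real.sqrt ((n:ℝ)/2) := step2.symm
        _ ≤ Real.sqrt ((n:ℝ) - 1) := step1
    have hup := (hb n hnN).2
    have hlo := hl n hn1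
    -- √(n-1) ≤ spex n ≤ C₂ n^r, and n^r M/√2 ≤ √(n-1); M = √2 C₂ + 1
    have hfin : (n : ℝ) ^ r * M / Real.sqrt 2 ≤ C₂ * (n:ℝ) ^ r := by linarith
    rw [div_le_iff₀ hsqrt2] at hfin
    have h2 : Real.sqrt 2 * Real.sqrt 2 = 2 := Real.mul_self_sqrt (by norm_num)
    nlinarith [hnr, hsqrt2]
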